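/- arXiv:1807.03571 — 7 statements merged into one kernel-verified Lean document; each statement's English description precedes it below -/
import Mathlib

section
/- (Safety ball around a point with positive margin; core of the misclassification-aggregator lemma.) Suppose class c is top at x, i.e., f c x ≥ f c' x for all classes c'. Then for every y ∈ E with M(c) · dist(x,y) ≤ g(x,c), class c is still top at y, i.e., f c y ≥ f c' y for all classes c'. In particular no class change can occur within distance g(x,c)/M(c) of x. -/
/-- The minimum confidence margin of class `c` at `x`:
`g(x,c) = min_{c' ≠ c} (f c x − f c' x)`. -/
noncomputable def margin {E : Type*} {C : Type*} [Fintype C] [DecidableEq C] [Nontrivial C]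
    (f : C → E → ℝ) (c : C) (x : E) : ℝ :=
  (Finset.univ.erase c).inf'
    (by obtain ⟨b, hb⟩ := exists_ne c
        exact ⟨b, Finset.mem_erase.2 ⟨hb, Finset.mem_univ b⟩⟩)
    (fun c' => f c x - f c' x)

/-- `M(c) = max_{c' ≠ c} (K c + K c')`. -/
noncomputable def Mconst {C : Type*} [Fintype C] [DecidableEq C] [Nontrivial C]
    (K : C → ℝ) (c : C) : ℝ :=
  (Finset.univ.erase c).sup'
    (by obtain ⟨b, hb⟩ := exists_ne c
        exact ⟨b, Finset.mem_erase.2 ⟨hb, Finset.mem_univ b⟩⟩)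
    (fun c' => K c + K c')

/-- **Safety ball around a point with positive margin.** If class `c` is top at `x`,
then for every `y` with `M(c) · dist(x,y) ≤ g(x,c)`, class `c` is still top at `y`;
in particular no class change can occur within distance `g(x,c)/M(c)` of `x`. -/
theorem top_class_stable_within_margin_ball
    {E : Type*} [MetricSpace E] {C : Type*} [Fintype C] [DecidableEq C] [Nontrivial C]
    (f : C → E → ℝ) (K : C → ℝ)
    (hf : ∀ c x y, |f c x - f c y| ≤ K c * dist x y)
    (c : C) (x : E)
    (htop : ∀ c', f c x ≥ f c' x)
    (y : E) (hy : Mconst K c * dist x y ≤ margin f c x) :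
    ∀ c', f c y ≥ f c' y := by
  intro c'
  rcases eq_or_ne c' c with rfl | hne
  · exact le_refl _
  · have hmem : c' ∈ Finset.univ.erase c := Finset.mem_erase.2 ⟨hne, Finset.mem_univ c'⟩
    have hmargin : margin f c x ≤ f c x - f c' x := by unfold margin; exact Finset.inf'_le (fun c'' => f c x - f c'' x) hmem
    have hM : K c + K c' ≤ Mconst K c := by unfold Mconst; exact Finset.le_sup' (fun c'' => K c + K c'') hmem
    have h1 : |f c x - f c y| ≤ K c * dist x y := hf c x y
    have h2 : |f c' x - f c' y| ≤ K c' * dist x y := hf c' x y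
    have hd : (0:ℝ) ≤ dist x y := dist_nonneg
    have : (K c + K c') * dist x y ≤ Mconst K c * dist x y :=
      mul_le_mul_of_nonneg_right hM hd
    have ha := abs_le.1 h1
    have hb := abs_le.1 h2
    nlinarith [ha.1, ha.2, hb.1, hb.2]
end

section
/- (All τ-grid points are misclassification aggregators under the Lipschitz margin condition.) Let α ∈ E, τ > 0, and set δ = (n·τ^p)^{1/p}. Suppose that for every τ-grid point x' with respect to α there is a class c_{x'} that is top at x' (f c_{x'} x' ≥ f c x' for all c) and such that δ ≤ 2·g(x', c_{x'}) / M(c_{x'}). Then for every τ-grid point x', for every x with ‖x − x'‖_p ≤ δ/2, class c_{x'} is top at x (f c_{x'} x ≥ f c x for all c); consequently, if some class c is strictly classified at x (g(x,c) > 0), then c = c_{x'}. -/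
/-- `x` is a τ-grid point with respect to `α`: every coordinate of `x` differs
from the corresponding coordinate of `α` by a natural multiple of `τ`. -/
def IsGridPoint {n : ℕ} {q : ENNReal} (τ : ℝ)
    (α x : PiLp q (fun _ : Fin n => ℝ)) : Prop :=
  ∀ i, ∃ m : ℕ, |x i - α i| = m * τ

/-- **All τ-grid points are misclassification aggregators** under the Lipschitz
margin condition `δ ≤ 2·g(x', c_{x'}) / M(c_{x'})`, where `δ = (n·τ^p)^{1/p}`. -/
theorem grid_points_are_misclassification_aggregators
    (n : ℕ) (hn : 1 ≤ n) (p : ℝ) (hp : 1 ≤ p) [Fact (1 ≤ ENNReal.ofReal p)]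
    {C : Type*} [Fintype C] [DecidableEq C] [Nontrivial C]
    (f : C → PiLp (ENNReal.ofReal p) (fun _ : Fin n => ℝ) → ℝ)
    (K : C → ℝ) (hK : ∀ c, 0 < K c)
    (hf : ∀ c x y, |f c x - f c y| ≤ K c * dist x y)
    (α : PiLp (ENNReal.ofReal p) (fun _ : Fin n => ℝ)) (τ : ℝ) (hτ : 0 < τ)
    (cstar : PiLp (ENNReal.ofReal p) (fun _ : Fin n => ℝ) → C)
    (hgrid : ∀ x', IsGridPoint τ α x' →
      (∀ c, f (cstar x') x' ≥ f c x') ∧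
      ((n : ℝ) * τ ^ p) ^ (1 / p) ≤
        2 * margin f (cstar x') x' / Mconst K (cstar x')) :
    ∀ x', IsGridPoint τ α x' →
      ∀ x, ‖x - x'‖ ≤ ((n : ℝ) * τ ^ p) ^ (1 / p) / 2 →
        (∀ c, f (cstar x') x ≥ f c x) ∧
        (∀ c, 0 < margin f c x → c = cstar x') := by
  intro x' hx' x hx
  obtain ⟨htop, hδ⟩ := hgrid x' hx'
  set cs := cstar x' with hcs
  set δ := ((n : ℝ) * τ ^ p) ^ (1 / p) with hδdef
  have hMpos : 0 < Mconst K cs := by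
    obtain ⟨b, hb⟩ := exists_ne cs
    have hmem : b ∈ Finset.univ.erase cs := Finset.mem_erase.2 ⟨hb, Finset.mem_univ b⟩
    calc (0:ℝ) < K cs + K b := by have := hK cs; have := hK b; linarith
    _ ≤ Mconst K cs := by unfold Mconst; exact Finset.le_sup' (fun c' => K cs + K c') hmem
  have hMδ : Mconst K cs * δ ≤ 2 * margin f cs x' := by
    rw [le_div_iff₀ hMpos] at hδ; linarith
  have hd : dist x x' ≤ δ / 2 := by rw [dist_eq_norm]; exact hx
  have hd0 : (0:ℝ) ≤ dist x x' := dist_nonneg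
  have key : ∀ c, c ≠ cs → f c x ≤ f cs x := by
    intro c hc
    have hmem : c ∈ Finset.univ.erase cs := Finset.mem_erase.2 ⟨hc, Finset.mem_univ c⟩
    have h1 := abs_le.mp (hf cs x x')
    have h2 := abs_le.mp (hf c x x')
    have hg : margin f cs x' ≤ f cs x' - f c x' := Finset.inf'_le _ hmem
    have hM : K cs + K c ≤ Mconst K cs := by unfold Mconst; exact Finset.le_sup' (fun c' => K cs + K c') hmem
    nlinarith [mul_le_mul_of_nonneg_right hM hd0, mul_le_mul_of_nonneg_left hd hMpos.le]
  constructor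
  · intro c
    by_cases h : c = cs
    · subst h; exact le_refl _
    · exact key c h
  · intro c hm
    by_contra hne
    have hmem : cs ∈ Finset.univ.erase c := Finset.mem_erase.2 ⟨Ne.symm hne, Finset.mem_univ cs⟩
    have h1 : margin f c x ≤ f c x - f cs x := Finset.inf'_le _ hmem
    have h2 := key c hne
    linarith
end

section
/- (Lower bound on the maximum safe radius via misclassification aggregators.) Let τ > 0 and set δ = (n·τ^p)^{1/p}. Assume (i) there exists at least one adversarial example, and (ii) every τ-grid point with respect to α is a misclassification aggregator with respect to δ/2. Then sInf { ‖y − α‖_p : y is a τ-grid point with respect to α and N y = c } ≤ sInf { ‖x − α‖_p : x is an adversarial example } + δ/2. (Equivalently, the maximum safe radius is at least the finite maximum safe radius minus δ/2.) -/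
/-- **Lower bound on the maximum safe radius via misclassification aggregators.**
If there is at least one adversarial example and every τ-grid point is a
misclassification aggregator with respect to `δ/2` (with `δ = (n·τ^p)^{1/p}`), then
the finite maximum safe radius is at most the maximum safe radius plus `δ/2`. -/
theorem fmsr_le_msr_add_half_delta
    (n : ℕ) (hn : 1 ≤ n) (p : ℝ) (hp : 1 ≤ p) [Fact (1 ≤ ENNReal.ofReal p)]
    {C : Type*} (N : PiLp (ENNReal.ofReal p) (fun _ : Fin n => ℝ) → C)
    (α : PiLp (ENNReal.ofReal p) (fun _ : Fin n => ℝ))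
    (c : C) (hc : c ≠ N α) (d : ℝ) (hd : 0 < d)
    (τ : ℝ) (hτ : 0 < τ)
    (hadv : ∃ x : PiLp (ENNReal.ofReal p) (fun _ : Fin n => ℝ), ‖x - α‖ ≤ d ∧ N x = c)
    (haggr : ∀ y, IsGridPoint τ α y →
      ∀ x, ‖x - y‖ ≤ ((n : ℝ) * τ ^ p) ^ (1 / p) / 2 → N x = c → N y = c) :
    sInf ((fun y => ‖y - α‖) '' {y | IsGridPoint τ α y ∧ N y = c}) ≤
      sInf ((fun x => ‖x - α‖) '' {x | ‖x - α‖ ≤ d ∧ N x = c}) +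
        ((n : ℝ) * τ ^ p) ^ (1 / p) / 2 := by
  have hp0 : 0 < p := lt_of_lt_of_le one_pos hp
  set δ : ℝ := ((n : ℝ) * τ ^ p) ^ (1 / p) with hδ
  have hpt : (ENNReal.ofReal p).toReal = p := ENNReal.toReal_ofReal hp0.le
  have key : ∀ x : PiLp (ENNReal.ofReal p) (fun _ : Fin n => ℝ), N x = c →
      ∃ y, (IsGridPoint τ α y ∧ N y = c) ∧ ‖y - α‖ ≤ ‖x - α‖ + δ / 2 := by
    intro x hx
    set y : PiLp (ENNReal.ofReal p) (fun _ : Fin n => ℝ) :=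
      WithLp.toLp (ENNReal.ofReal p) (fun i => α i + (if 0 ≤ x i - α i then 1 else -1) *
        ((⌊|x i - α i| / τ + 1/2⌋₊ : ℝ) * τ)) with hy
    have hmτ : ∀ i, (0:ℝ) ≤ (⌊|x i - α i| / τ + 1/2⌋₊ : ℝ) * τ := fun i =>
      mul_nonneg (Nat.cast_nonneg _) hτ.le
    have hsub : ∀ i, y i - α i = (if 0 ≤ x i - α i then 1 else -1) *
        ((⌊|x i - α i| / τ + 1/2⌋₊ : ℝ) * τ) := by
      intro i; simp [hy]
    have hgrid : IsGridPoint τ α y := by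
      intro i
      refine ⟨⌊|x i - α i| / τ + 1/2⌋₊, ?_⟩
      rw [hsub i]
      split
      · rw [one_mul, abs_of_nonneg (hmτ i)]
      · rw [neg_one_mul, abs_neg, abs_of_nonneg (hmτ i)]
    have hcoord : ∀ i, |x i - y i| ≤ τ / 2 := by
      intro i
      set t : ℝ := x i - α i with ht
      set m : ℕ := ⌊|t| / τ + 1/2⌋₊ with hm
      have h1 : (m:ℝ) ≤ |t| / τ + 1/2 := Nat.floor_le (by positivity)
      have h2 : |t| / τ + 1/2 < (m:ℝ) + 1 := Nat.lt_floor_add_one _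
      have hr : |t| = (|t| / τ) * τ := (div_mul_cancel₀ _ hτ.ne').symm
      have hxy : x i - y i = t - (if 0 ≤ t then 1 else -1) * ((m:ℝ) * τ) := by
        rw [show x i - y i = (x i - α i) - (y i - α i) from by ring, hsub i]
      have habs : |x i - y i| = |(|t| - (m:ℝ) * τ)| := by
        rw [hxy]
        by_cases h0 : 0 ≤ t
        · rw [if_pos h0, one_mul, abs_of_nonneg h0]
        · rw [if_neg h0, abs_of_neg (lt_of_not_ge h0),
            show t - (-1) * ((m:ℝ) * τ) = -(-t - (m:ℝ) * τ) from by ring, abs_neg]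
      rw [habs, abs_le]
      constructor <;> nlinarith [mul_le_mul_of_nonneg_right h1 hτ.le,
        mul_lt_mul_of_pos_right h2 hτ]
    have hnorm : ‖x - y‖ ≤ δ / 2 := by
      rw [PiLp.norm_eq_sum (by rw [hpt]; exact hp0), hpt]
      have hsum : ∑ i, ‖(x - y) i‖ ^ p ≤ (n:ℝ) * (τ/2) ^ p := by
        calc ∑ i, ‖(x - y) i‖ ^ p ≤ ∑ _i : Fin n, (τ/2) ^ p := by
              apply Finset.sum_le_sum
              intro i _
              have : ‖(x - y) i‖ = |x i - y i| := by
                simp [Real.norm_eq_abs]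
              rw [this]
              exact Real.rpow_le_rpow (abs_nonneg _) (hcoord i) hp0.le
          _ = (n:ℝ) * (τ/2) ^ p := by
              rw [Finset.sum_const, Finset.card_univ, Fintype.card_fin, nsmul_eq_mul]
      have heq : ((n:ℝ) * (τ/2) ^ p) ^ (1/p) = δ / 2 := by
        have h2p : ((2:ℝ) ^ p) ^ (1/p) = 2 := by
          rw [← Real.rpow_mul (by norm_num : (0:ℝ) ≤ 2),
            mul_one_div_cancel hp0.ne', Real.rpow_one]
        rw [Real.div_rpow hτ.le (by norm_num : (0:ℝ) ≤ 2),
          show (n:ℝ) * (τ ^ p / 2 ^ p) = ((n:ℝ) * τ ^ p) / 2 ^ p from by ring,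
          Real.div_rpow (by positivity) (by positivity), h2p, hδ]
      calc (∑ i, ‖(x - y) i‖ ^ p) ^ (1/p)
          ≤ ((n:ℝ) * (τ/2) ^ p) ^ (1/p) := by
            apply Real.rpow_le_rpow _ hsum (by positivity)
            exact Finset.sum_nonneg fun i _ => Real.rpow_nonneg (norm_nonneg _) _
        _ = δ / 2 := heq
    have hyc : N y = c := haggr y hgrid x hnorm hx
    refine ⟨y, ⟨hgrid, hyc⟩, ?_⟩
    calc ‖y - α‖ = ‖(y - x) + (x - α)‖ := by rw [sub_add_sub_cancel]
      _ ≤ ‖y - x‖ + ‖x - α‖ := norm_add_le _ _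
      _ ≤ δ / 2 + ‖x - α‖ := by rw [norm_sub_rev]; linarith [hnorm]
      _ = ‖x - α‖ + δ / 2 := by ring
  obtain ⟨x₀, hx₀d, hx₀c⟩ := hadv
  obtain ⟨y₀, hy₀, _⟩ := key x₀ hx₀c
  set G := (fun y => ‖y - α‖) '' {y | IsGridPoint τ α y ∧ N y = c} with hG
  set A := (fun x => ‖x - α‖) '' {x | ‖x - α‖ ≤ d ∧ N x = c} with hA
  have hGbdd : BddBelow G := ⟨0, by rintro r ⟨z, _, rfl⟩; exact norm_nonneg _⟩
  have hAne : A.Nonempty := ⟨_, ⟨x₀, ⟨hx₀d, hx₀c⟩, rfl⟩⟩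
  have hmain : sInf G - δ / 2 ≤ sInf A := by
    apply le_csInf hAne
    rintro a ⟨x, ⟨hxd, hxc⟩, rfl⟩
    obtain ⟨y, hyG, hle⟩ := key x hxc
    have := csInf_le hGbdd ⟨y, hyG, rfl⟩
    simp only at this ⊢
    linarith
  linarith
end

section
/- (Provable guarantee for approximating the maximum safe radius by finite optimisation over the τ-grid.) Let α ∈ E be strictly classified as c₀ (g(α,c₀) > 0), let c ≠ c₀ be a target class, d > 0, τ > 0, and δ = (n·τ^p)^{1/p}. Call x an adversarial example if ‖x − α‖_p ≤ d and g(x,c) > 0. Assume (i) the set of adversarial examples is nonempty, and (ii) for every τ-grid point x' with respect to α there is a class c_{x'} top at x' with δ ≤ 2·g(x', c_{x'}) / M(c_{x'}). Let m = sInf { ‖x − α‖_p : x adversarial } and m_G = sInf { ‖x − α‖_p : x is a τ-grid point with respect to α and g(x,c) > 0 }. Then m_G − δ/2 ≤ m ≤ m_G. -/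
section helpers

variable {E : Type*} {C : Type*} [Fintype C] [DecidableEq C] [Nontrivial C]

lemma my_erase_nonempty (c : C) : (Finset.univ.erase c).Nonempty := by
  obtain ⟨b, hb⟩ := exists_ne c
  exact ⟨b, Finset.mem_erase.2 ⟨hb, Finset.mem_univ b⟩⟩

lemma margin_le_of_ne (f : C → E → ℝ) {c c' : C} (h : c' ≠ c) (x : E) :
    margin f c x ≤ f c x - f c' x :=
  Finset.inf'_le _ (Finset.mem_erase.2 ⟨h, Finset.mem_univ _⟩)

lemma lt_of_margin_pos {f : C → E → ℝ} {c : C} {x : E} (h : 0 < margin f c x)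
    {c' : C} (h' : c' ≠ c) : f c' x < f c x := by
  have := (Finset.lt_inf'_iff (my_erase_nonempty c) ).1 h c'
    (Finset.mem_erase.2 ⟨h', Finset.mem_univ _⟩)
  linarith

lemma le_Mconst (K : C → ℝ) {c c' : C} (h : c' ≠ c) : K c + K c' ≤ Mconst K c :=
  Finset.le_sup' (fun c'' => K c + K c'') (Finset.mem_erase.2 ⟨h, Finset.mem_univ _⟩)

lemma Mconst_pos {K : C → ℝ} (hK : ∀ c, 0 < K c) (c : C) : 0 < Mconst K c := by
  obtain ⟨b, hb⟩ := exists_ne c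
  have := le_Mconst K hb
  have h1 := hK c; have h2 := hK b
  linarith

lemma margin_lip [PseudoMetricSpace E] (f : C → E → ℝ) (K : C → ℝ)
    (hf : ∀ c x y, |f c x - f c y| ≤ K c * dist x y) (c : C) (x y : E) :
    margin f c y ≤ margin f c x + Mconst K c * dist x y := by
  obtain ⟨c', hc', hmx⟩ := Finset.exists_mem_eq_inf' (my_erase_nonempty c)
    (fun c' => f c x - f c' x)
  have hne : c' ≠ c := (Finset.mem_erase.1 hc').1
  have h1 : margin f c y ≤ f c y - f c' y := margin_le_of_ne f hne y
  have h2 : f c y - f c x ≤ K c * dist x y := by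
    have := hf c y x
    rw [dist_comm x y]
    exact (abs_le.1 this).2
  have h3 : f c' x - f c' y ≤ K c' * dist x y := (abs_le.1 (hf c' x y)).2
  have h4 : K c + K c' ≤ Mconst K c := le_Mconst K hne
  have hd : 0 ≤ dist x y := dist_nonneg
  have hmx' : margin f c x = f c x - f c' x := hmx
  nlinarith [mul_le_mul_of_nonneg_right h4 hd]

end helpers
lemma round_grid_aux {n : ℕ} {p : ℝ} (hp : 1 ≤ p) [Fact (1 ≤ ENNReal.ofReal p)]
    (α : PiLp (ENNReal.ofReal p) (fun _ : Fin n => ℝ)) {τ : ℝ} (hτ : 0 < τ)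
    (x : PiLp (ENNReal.ofReal p) (fun _ : Fin n => ℝ)) :
    ∃ x' : PiLp (ENNReal.ofReal p) (fun _ : Fin n => ℝ),
      (∀ i, ∃ m : ℕ, |x' i - α i| = m * τ) ∧
      ‖x' - x‖ ≤ ((n : ℝ) * τ ^ p) ^ (1 / p) / 2 := by
  have hp0 : 0 < p := lt_of_lt_of_le one_pos hp
  have hq : (ENNReal.ofReal p).toReal = p := ENNReal.toReal_ofReal hp0.le
  set x' : PiLp (ENNReal.ofReal p) (fun _ : Fin n => ℝ) :=
    WithLp.toLp _ (fun i => α i + τ * round ((x i - α i) / τ)) with hx'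
  refine ⟨x', ?_, ?_⟩
  · intro i
    refine ⟨(round ((x i - α i) / τ)).natAbs, ?_⟩
    show |α i + τ * round ((x i - α i) / τ) - α i| = _
    rw [add_sub_cancel_left, abs_mul, abs_of_pos hτ, Nat.cast_natAbs, Int.cast_abs]
    ring
  · have hcomp : ∀ i : Fin n, ‖(x' - x) i‖ ≤ τ / 2 := by
      intro i
      set t := (x i - α i) / τ with ht
      have htt : τ * t = x i - α i := by rw [ht]; field_simp
      have h1 : |(round t : ℝ) - t| ≤ 1 / 2 := by
        rw [abs_sub_comm]; exact abs_sub_round t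
      have h2 : (x' - x) i = τ * ((round t : ℝ) - t) := by
        show x' i - x i = _
        rw [hx']
        show α i + τ * round t - x i = _
        rw [mul_sub, htt]; ring
      rw [Real.norm_eq_abs, h2, abs_mul, abs_of_pos hτ]
      calc τ * |(round t : ℝ) - t| ≤ τ * (1/2) := mul_le_mul_of_nonneg_left h1 hτ.le
        _ = τ / 2 := by ring
    rw [PiLp.norm_eq_sum (by rw [hq]; exact hp0), hq]
    have hsum : ∑ i : Fin n, ‖(x' - x) i‖ ^ p ≤ (n : ℝ) * (τ / 2) ^ p := by
      have := Finset.sum_le_card_nsmul Finset.univ (fun i => ‖(x' - x) i‖ ^ p)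
        ((τ/2) ^ p) (fun i _ => Real.rpow_le_rpow (norm_nonneg _) (hcomp i) hp0.le)
      simpa [Finset.card_univ, nsmul_eq_mul] using this
    have hnn : (0:ℝ) ≤ ∑ i : Fin n, ‖(x' - x) i‖ ^ p :=
      Finset.sum_nonneg fun i _ => Real.rpow_nonneg (norm_nonneg _) p
    calc (∑ i : Fin n, ‖(x' - x) i‖ ^ p) ^ (1/p)
        ≤ ((n : ℝ) * (τ / 2) ^ p) ^ (1/p) := Real.rpow_le_rpow hnn hsum (by positivity)
      _ = ((n : ℝ) * τ ^ p) ^ (1 / p) / 2 := by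
          rw [Real.div_rpow hτ.le (by norm_num : (0:ℝ) ≤ 2)]
          rw [show (n : ℝ) * (τ ^ p / 2 ^ p) = ((n:ℝ) * τ ^ p) / 2 ^ p by ring]
          rw [Real.div_rpow (by positivity) (Real.rpow_nonneg (by norm_num) p)]
          rw [← Real.rpow_mul (by norm_num : (0:ℝ) ≤ 2), mul_one_div_cancel hp0.ne',
            Real.rpow_one]
/-- **Provable guarantee for approximating the maximum safe radius by finite
optimisation over the τ-grid:** `m_G − δ/2 ≤ m ≤ m_G`. -/
theorem msr_fmsr_provable_guarantee
    (n : ℕ) (hn : 1 ≤ n) (p : ℝ) (hp : 1 ≤ p) [Fact (1 ≤ ENNReal.ofReal p)]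
    {C : Type*} [Fintype C] [DecidableEq C] [Nontrivial C]
    (f : C → PiLp (ENNReal.ofReal p) (fun _ : Fin n => ℝ) → ℝ)
    (K : C → ℝ) (hK : ∀ c, 0 < K c)
    (hf : ∀ c x y, |f c x - f c y| ≤ K c * dist x y)
    (α : PiLp (ENNReal.ofReal p) (fun _ : Fin n => ℝ))
    (c₀ : C) (hα : 0 < margin f c₀ α)
    (c : C) (hc : c ≠ c₀) (d : ℝ) (hd : 0 < d)
    (τ : ℝ) (hτ : 0 < τ)
    (hadv : ∃ x : PiLp (ENNReal.ofReal p) (fun _ : Fin n => ℝ),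
      ‖x - α‖ ≤ d ∧ 0 < margin f c x)
    (hgrid : ∀ x', IsGridPoint τ α x' →
      ∃ c', (∀ c'', f c' x' ≥ f c'' x') ∧
        ((n : ℝ) * τ ^ p) ^ (1 / p) ≤ 2 * margin f c' x' / Mconst K c') :
    sInf ((fun y => ‖y - α‖) '' {y | IsGridPoint τ α y ∧ 0 < margin f c y}) -
        ((n : ℝ) * τ ^ p) ^ (1 / p) / 2 ≤
      sInf ((fun x => ‖x - α‖) '' {x | ‖x - α‖ ≤ d ∧ 0 < margin f c x}) ∧
    sInf ((fun x => ‖x - α‖) '' {x | ‖x - α‖ ≤ d ∧ 0 < margin f c x}) ≤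
      sInf ((fun y => ‖y - α‖) '' {y | IsGridPoint τ α y ∧ 0 < margin f c y}) := by
  set δ : ℝ := ((n : ℝ) * τ ^ p) ^ (1 / p) with hδdef
  have hp0 : 0 < p := lt_of_lt_of_le one_pos hp
  have hδpos : 0 < δ := by
    apply Real.rpow_pos_of_pos
    have : (0:ℝ) < n := by exact_mod_cast hn
    have := Real.rpow_pos_of_pos hτ p
    positivity
  -- key step: near any point with positive margin there is a grid point with
  -- positive margin, at distance at most δ/2
  have key : ∀ x : PiLp (ENNReal.ofReal p) (fun _ : Fin n => ℝ), 0 < margin f c x →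
      ∃ x', IsGridPoint τ α x' ∧ 0 < margin f c x' ∧ ‖x' - α‖ ≤ ‖x - α‖ + δ / 2 := by
    intro x hx
    obtain ⟨x', hgp, hnear⟩ := round_grid_aux hp α hτ x
    obtain ⟨c', _htop, hmarg⟩ := hgrid x' hgp
    have hM : 0 < Mconst K c' := Mconst_pos hK c'
    have hg' : Mconst K c' * (δ / 2) ≤ margin f c' x' := by
      rw [le_div_iff₀ hM] at hmarg
      nlinarith
    have hdist : dist x x' ≤ δ / 2 := by
      rw [dist_eq_norm, norm_sub_rev]
      exact hnear
    have hlow : Mconst K c' * (δ / 2) - Mconst K c' * dist x x' ≤ margin f c' x := by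
      have hlip := margin_lip f K hf c' x x'
      nlinarith
    have hmx : 0 ≤ margin f c' x := by nlinarith
    have hcc : c' = c := by
      by_contra hne
      have h1 : f c' x < f c x := lt_of_margin_pos hx hne
      have h2 : margin f c' x ≤ f c' x - f c x :=
        margin_le_of_ne f (fun h => hne h.symm) x
      linarith
    subst hcc
    refine ⟨x', hgp, by nlinarith [mul_pos hM (half_pos hδpos)], ?_⟩
    calc ‖x' - α‖ = ‖(x' - x) + (x - α)‖ := by rw [sub_add_sub_cancel]
      _ ≤ ‖x' - x‖ + ‖x - α‖ := norm_add_le _ _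
      _ ≤ ‖x - α‖ + δ / 2 := by linarith
  obtain ⟨x₀, hx₀d, hx₀m⟩ := hadv
  set A : Set ℝ := (fun x => ‖x - α‖) '' {x | ‖x - α‖ ≤ d ∧ 0 < margin f c x} with hA
  set G : Set ℝ := (fun y => ‖y - α‖) '' {y | IsGridPoint τ α y ∧ 0 < margin f c y} with hG
  have hAne : A.Nonempty := ⟨‖x₀ - α‖, ⟨x₀, ⟨hx₀d, hx₀m⟩, rfl⟩⟩
  have hAbdd : BddBelow A := ⟨0, by rintro a ⟨x, _, rfl⟩; exact norm_nonneg _⟩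
  have hGbdd : BddBelow G := ⟨0, by rintro a ⟨x, _, rfl⟩; exact norm_nonneg _⟩
  obtain ⟨y₀, hy₀g, hy₀m, hy₀n⟩ := key x₀ hx₀m
  have hGne : G.Nonempty := ⟨‖y₀ - α‖, ⟨y₀, ⟨hy₀g, hy₀m⟩, rfl⟩⟩
  have hmd : sInf A ≤ d :=
    le_trans (csInf_le hAbdd ⟨x₀, ⟨hx₀d, hx₀m⟩, rfl⟩) hx₀d
  constructor
  · refine le_csInf hAne ?_
    rintro a ⟨x, ⟨hxd, hxm⟩, rfl⟩
    obtain ⟨x', hgp, hxm', hxn'⟩ := key x hxm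
    have := csInf_le hGbdd (⟨x', ⟨hgp, hxm'⟩, rfl⟩ : ‖x' - α‖ ∈ G)
    rw [sub_le_iff_le_add]
    linarith
  · refine le_csInf hGne ?_
    rintro b ⟨y, ⟨hgy, hmy⟩, rfl⟩
    by_cases hyd : ‖y - α‖ ≤ d
    · exact csInf_le hAbdd ⟨y, ⟨hyd, hmy⟩, rfl⟩
    · push_neg at hyd
      linarith
end

section
/- (Admissibility of the margin-based heuristic.) Suppose each Lipschitz constant K c is strictly positive. Let x ∈ E be strictly classified as c, i.e., g(x,c) > 0. Then for every y ∈ E at which class c has been overtaken, i.e., g(y,c) ≤ 0 (there is some c' ≠ c with f c' y ≥ f c y), one has dist(x,y) ≥ g(x,c) / M(c). Thus the heuristic value g(x,c)/M(c) never overestimates the distance from x to a point with a changed classification. -/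
/-- **Admissibility of the margin-based heuristic.** If `x` is strictly classified
as `c` and class `c` has been overtaken at `y` (`g(y,c) ≤ 0`), then
`dist(x,y) ≥ g(x,c) / M(c)`: the heuristic never overestimates the distance to a
point with a changed classification. -/
theorem heuristic_admissible
    {E : Type*} [MetricSpace E] {C : Type*} [Fintype C] [DecidableEq C] [Nontrivial C]
    (f : C → E → ℝ) (K : C → ℝ) (hK : ∀ c, 0 < K c)
    (hf : ∀ c x y, |f c x - f c y| ≤ K c * dist x y)
    (c : C) (x : E) (hx : 0 < margin f c x) :
    ∀ y : E, margin f c y ≤ 0 → margin f c x / Mconst K c ≤ dist x y := by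

  intro y hy
  obtain ⟨c', hc', hc'le⟩ := Finset.exists_mem_eq_inf'
    (by obtain ⟨b, hb⟩ := exists_ne c
        exact ⟨b, Finset.mem_erase.2 ⟨hb, Finset.mem_univ b⟩⟩)
    (fun c'' => f c y - f c'' y)
  have hyc' : f c y - f c' y ≤ 0 := by rw [margin] at hy; rw [hc'le] at hy; exact hy
  have hMpos : 0 < Mconst K c := lt_of_lt_of_le (by linarith [hK c, hK c']) 
    (Finset.le_sup' (fun c'' => K c + K c'') hc')
  rw [div_le_iff₀ hMpos]
  have h1 : margin f c x ≤ f c x - f c' x := Finset.inf'_le _ hc'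
  have h2 : f c x - f c' x ≤ (f c y - f c' y) + (K c + K c') * dist x y := by
    have a := (abs_le.1 (hf c x y)).2
    have b := (abs_le.1 (hf c' x y)).1
    have : dist x y = dist y x := dist_comm x y
    nlinarith
  have h3 : (K c + K c') * dist x y ≤ Mconst K c * dist x y :=
    mul_le_mul_of_nonneg_right (Finset.le_sup' (fun c'' => K c + K c'') hc') dist_nonneg
  linarith
end

section
/- (Feature-restricted lower bound via misclassification aggregators.) Let S ⊆ Fin n be a set of coordinates (a feature), let τ > 0, and set δ = (n·τ^p)^{1/p}. Assume (i) there exists an adversarial example x with x i = α i for every i ∉ S, and (ii) every τ-grid point with respect to α is a misclassification aggregator with respect to δ/2. Then sInf { ‖y − α‖_p : y is a τ-grid point with respect to α, N y = c, and y i = α i for every i ∉ S } ≤ sInf { ‖x − α‖_p : x is an adversarial example and x i = α i for every i ∉ S } + δ/2. -/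
/-- **Feature-restricted lower bound via misclassification aggregators.**
If there is an adversarial example supported on the feature `S` and every τ-grid
point is a misclassification aggregator with respect to `δ/2`
(with `δ = (n·τ^p)^{1/p}`), then the infimum distance to a τ-grid point classified
as `c` and supported on `S` is at most the infimum distance to an `S`-supported
adversarial example plus `δ/2`. -/
theorem feature_restricted_fmsr_le_msr_add_half_delta
    (n : ℕ) (hn : 1 ≤ n) (p : ℝ) (hp : 1 ≤ p) [Fact (1 ≤ ENNReal.ofReal p)]
    {C : Type*} (N : PiLp (ENNReal.ofReal p) (fun _ : Fin n => ℝ) → C)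
    (α : PiLp (ENNReal.ofReal p) (fun _ : Fin n => ℝ))
    (c : C) (hc : c ≠ N α) (d : ℝ) (hd : 0 < d)
    (S : Set (Fin n)) (τ : ℝ) (hτ : 0 < τ)
    (hadv : ∃ x : PiLp (ENNReal.ofReal p) (fun _ : Fin n => ℝ),
      (‖x - α‖ ≤ d ∧ N x = c) ∧ ∀ i ∉ S, x i = α i)
    (haggr : ∀ y, IsGridPoint τ α y →
      ∀ x, ‖x - y‖ ≤ ((n : ℝ) * τ ^ p) ^ (1 / p) / 2 → N x = c → N y = c) :
    sInf ((fun y => ‖y - α‖) ''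
        {y | IsGridPoint τ α y ∧ N y = c ∧ ∀ i ∉ S, y i = α i}) ≤
      sInf ((fun x => ‖x - α‖) ''
        {x | (‖x - α‖ ≤ d ∧ N x = c) ∧ ∀ i ∉ S, x i = α i}) +
        ((n : ℝ) * τ ^ p) ^ (1 / p) / 2 := by
  have hp0 : 0 < p := lt_of_lt_of_le one_pos hp
  have hptoReal : (ENNReal.ofReal p).toReal = p := ENNReal.toReal_ofReal hp0.le
  set δ : ℝ := ((n : ℝ) * τ ^ p) ^ (1 / p) with hδ
  -- key rounding construction
  have key : ∀ x : PiLp (ENNReal.ofReal p) (fun _ : Fin n => ℝ),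
      (‖x - α‖ ≤ d ∧ N x = c) → (∀ i ∉ S, x i = α i) →
      ∃ y, (IsGridPoint τ α y ∧ N y = c ∧ ∀ i ∉ S, y i = α i) ∧
        ‖y - α‖ ≤ ‖x - α‖ + δ / 2 := by
    intro x hx hxS
    set y : PiLp (ENNReal.ofReal p) (fun _ : Fin n => ℝ) :=
      WithLp.toLp _ (fun i => α i + τ * (round ((x i - α i) / τ) : ℤ)) with hy
    have hgrid : IsGridPoint τ α y := by
      intro i
      refine ⟨(round ((x i - α i) / τ)).natAbs, ?_⟩
      have : y i - α i = τ * (round ((x i - α i) / τ) : ℤ) := by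
        simp [hy]
      rw [this, abs_mul, abs_of_pos hτ, Nat.cast_natAbs]
      push_cast
      ring
    -- coordinate-wise bound
    have hcoord : ∀ i, |y i - x i| ≤ τ / 2 := by
      intro i
      have h1 : y i - x i = τ * ((round ((x i - α i) / τ) : ℤ) - (x i - α i) / τ) := by
        field_simp [hy]
        ring
      rw [h1, abs_mul, abs_of_pos hτ, abs_sub_comm]
      calc τ * |((x i - α i) / τ) - (round ((x i - α i) / τ) : ℤ)|
          ≤ τ * (1 / 2) := by
            exact mul_le_mul_of_nonneg_left (abs_sub_round _) hτ.le
        _ = τ / 2 := by ring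
    -- norm bound ‖y - x‖ ≤ δ / 2
    have hnorm : ‖y - x‖ ≤ δ / 2 := by
      rw [PiLp.norm_eq_sum (by rw [hptoReal]; exact hp0), hptoReal]
      have hsum : ∑ i, ‖(y - x) i‖ ^ p ≤ (n : ℝ) * (τ / 2) ^ p := by
        calc ∑ i, ‖(y - x) i‖ ^ p ≤ ∑ _i : Fin n, (τ / 2) ^ p := by
              apply Finset.sum_le_sum
              intro i _
              have : ‖(y - x) i‖ = |y i - x i| := by
                simp [PiLp.sub_apply, Real.norm_eq_abs]
              rw [this]
              exact Real.rpow_le_rpow (abs_nonneg _) (hcoord i) hp0.le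
          _ = (n : ℝ) * (τ / 2) ^ p := by
              simp [Finset.sum_const, nsmul_eq_mul]
      have hδeq : ((n : ℝ) * (τ / 2) ^ p) ^ (1 / p) = δ / 2 := by
        rw [Real.div_rpow hτ.le (by norm_num : (0:ℝ) ≤ 2), hδ]
        rw [show (n : ℝ) * (τ ^ p / 2 ^ p) = ((n : ℝ) * τ ^ p) / 2 ^ p by ring]
        rw [Real.div_rpow (by positivity) (by positivity)]
        congr 1
        rw [← Real.rpow_mul (by norm_num : (0:ℝ) ≤ 2), mul_one_div_cancel hp0.ne', Real.rpow_one]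
      calc (∑ i, ‖(y - x) i‖ ^ p) ^ (1 / p)
          ≤ ((n : ℝ) * (τ / 2) ^ p) ^ (1 / p) := by
            apply Real.rpow_le_rpow (by positivity) hsum (by positivity)
        _ = δ / 2 := hδeq
    have hnorm' : ‖x - y‖ ≤ δ / 2 := by rwa [norm_sub_rev]
    have hNy : N y = c := haggr y hgrid x hnorm' hx.2
    have hyS : ∀ i ∉ S, y i = α i := by
      intro i hi
      simp [hy, hxS i hi]
    refine ⟨y, ⟨hgrid, hNy, hyS⟩, ?_⟩
    calc ‖y - α‖ ≤ ‖y - x‖ + ‖x - α‖ := by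
          simpa using norm_sub_le_norm_sub_add_norm_sub y x α
      _ ≤ ‖x - α‖ + δ / 2 := by linarith [hnorm]
  -- conclude via infima
  obtain ⟨x₀, hx₀, hx₀S⟩ := hadv
  have hLbdd : BddBelow ((fun y => ‖y - α‖) ''
      {y | IsGridPoint τ α y ∧ N y = c ∧ ∀ i ∉ S, y i = α i}) := by
    refine ⟨0, ?_⟩
    rintro b ⟨z, _, rfl⟩
    exact norm_nonneg _
  rw [← sub_le_iff_le_add]
  refine le_csInf ⟨‖x₀ - α‖, ⟨x₀, ⟨hx₀, hx₀S⟩, rfl⟩⟩ ?_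
  rintro b ⟨x, ⟨hx, hxS⟩, rfl⟩
  obtain ⟨y, hyL, hy⟩ := key x hx hxS
  rw [sub_le_iff_le_add]
  calc sInf _ ≤ ‖y - α‖ := csInf_le hLbdd ⟨y, hyL, rfl⟩
    _ ≤ ‖x - α‖ + δ / 2 := hy
end

section
/- (Provable guarantee for feature-restricted finite optimisation.) Let α ∈ E be strictly classified as c₀ (g(α,c₀) > 0), let c ≠ c₀ be a target class, d > 0, τ > 0, δ = (n·τ^p)^{1/p}, and let S ⊆ Fin n be a set of coordinates (a feature). Call x an S-restricted adversarial example if ‖x − α‖_p ≤ d, g(x,c) > 0, and x i = α i for every i ∉ S. Assume (i) the set of S-restricted adversarial examples is nonempty, and (ii) for every τ-grid point x' with respect to α there is a class c_{x'} top at x' with δ ≤ 2·g(x', c_{x'}) / M(c_{x'}). Let m_S = sInf { ‖x − α‖_p : x is an S-restricted adversarial example } and m_{G,S} = sInf { ‖y − α‖_p : y is a τ-grid point with respect to α, g(y,c) > 0, and y i = α i for every i ∉ S }. Then m_{G,S} − δ/2 ≤ m_S ≤ m_{G,S}. -/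
/-- **Provable guarantee for feature-restricted finite optimisation:**
`m_{G,S} − δ/2 ≤ m_S ≤ m_{G,S}`. -/
theorem feature_restricted_provable_guarantee
    (n : ℕ) (hn : 1 ≤ n) (p : ℝ) (hp : 1 ≤ p) [Fact (1 ≤ ENNReal.ofReal p)]
    {C : Type*} [Fintype C] [DecidableEq C] [Nontrivial C]
    (f : C → PiLp (ENNReal.ofReal p) (fun _ : Fin n => ℝ) → ℝ)
    (K : C → ℝ) (hK : ∀ c, 0 < K c)
    (hf : ∀ c x y, |f c x - f c y| ≤ K c * dist x y)
    (α : PiLp (ENNReal.ofReal p) (fun _ : Fin n => ℝ))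
    (c₀ : C) (hα : 0 < margin f c₀ α)
    (c : C) (hc : c ≠ c₀) (d : ℝ) (hd : 0 < d)
    (τ : ℝ) (hτ : 0 < τ) (S : Set (Fin n))
    (hadv : ∃ x : PiLp (ENNReal.ofReal p) (fun _ : Fin n => ℝ),
      (‖x - α‖ ≤ d ∧ 0 < margin f c x) ∧ ∀ i ∉ S, x i = α i)
    (hgrid : ∀ x', IsGridPoint τ α x' →
      ∃ c', (∀ c'', f c' x' ≥ f c'' x') ∧
        ((n : ℝ) * τ ^ p) ^ (1 / p) ≤ 2 * margin f c' x' / Mconst K c') :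
    sInf ((fun y => ‖y - α‖) ''
        {y | IsGridPoint τ α y ∧ 0 < margin f c y ∧ ∀ i ∉ S, y i = α i}) -
        ((n : ℝ) * τ ^ p) ^ (1 / p) / 2 ≤
      sInf ((fun x => ‖x - α‖) ''
        {x | (‖x - α‖ ≤ d ∧ 0 < margin f c x) ∧ ∀ i ∉ S, x i = α i}) ∧
    sInf ((fun x => ‖x - α‖) ''
        {x | (‖x - α‖ ≤ d ∧ 0 < margin f c x) ∧ ∀ i ∉ S, x i = α i}) ≤
      sInf ((fun y => ‖y - α‖) ''
        {y | IsGridPoint τ α y ∧ 0 < margin f c y ∧ ∀ i ∉ S, y i = α i}) := by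

  classical
  have hp0 : 0 < p := lt_of_lt_of_le one_pos hp
  have hq : (ENNReal.ofReal p).toReal = p := ENNReal.toReal_ofReal hp0.le
  set δ : ℝ := ((n : ℝ) * τ ^ p) ^ (1 / p) with hδdef
  have hn0 : (0 : ℝ) < (n : ℝ) := by exact_mod_cast hn
  have hδpos : 0 < δ := by
    apply Real.rpow_pos_of_pos
    have : (0 : ℝ) < τ ^ p := Real.rpow_pos_of_pos hτ p
    positivity
  -- positivity of Mconst
  have hne : ∀ c' : C, (Finset.univ.erase c').Nonempty := fun c' => by
    obtain ⟨b, hb⟩ := exists_ne c'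
    exact ⟨b, Finset.mem_erase.2 ⟨hb, Finset.mem_univ b⟩⟩
  have hMpos : ∀ c', 0 < Mconst K c' := by
    intro c'
    obtain ⟨b, hb⟩ := hne c'
    calc (0 : ℝ) < K c' + K b := add_pos (hK c') (hK b)
    _ ≤ Mconst K c' := by unfold Mconst; exact Finset.le_sup' (fun c'' => K c' + K c'') hb
  -- rounding lemma
  have hround : ∀ x : PiLp (ENNReal.ofReal p) (fun _ : Fin n => ℝ),
      (∀ i ∉ S, x i = α i) →
      ∃ x' : PiLp (ENNReal.ofReal p) (fun _ : Fin n => ℝ),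
        IsGridPoint τ α x' ∧ (∀ i ∉ S, x' i = α i) ∧ dist x x' ≤ δ / 2 := by
    intro x hxS
    refine ⟨(WithLp.toLp (ENNReal.ofReal p) (fun i => α i + (round ((x i - α i) / τ) : ℤ) * τ) :
        PiLp (ENNReal.ofReal p) (fun _ : Fin n => ℝ)), ?_, ?_, ?_⟩
    · intro i
      refine ⟨(round ((x i - α i) / τ)).natAbs, ?_⟩
      have : (α i + (round ((x i - α i) / τ) : ℤ) * τ) - α i
          = (round ((x i - α i) / τ) : ℤ) * τ := by ring
      rw [this, abs_mul, abs_of_pos hτ, Nat.cast_natAbs, Int.cast_abs]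
    · intro i hi
      have : x i - α i = 0 := by rw [hxS i hi]; ring
      simp [this]
    · -- distance bound
      have hcoord : ∀ i, dist (x i) (α i + (round ((x i - α i) / τ) : ℤ) * τ) ≤ τ / 2 := by
        intro i
        set r : ℝ := x i - α i with hr
        have hτ' : τ ≠ 0 := ne_of_gt hτ
        have : x i - (α i + (round (r / τ) : ℤ) * τ) = (r / τ - (round (r / τ) : ℤ)) * τ := by
          field_simp [hr]
          ring
        rw [Real.dist_eq, this, abs_mul, abs_of_pos hτ]
        have h2 : |r / τ - (round (r / τ) : ℤ)| ≤ 1 / 2 := abs_sub_round (r / τ)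
        calc |r / τ - (round (r / τ) : ℤ)| * τ ≤ (1 / 2) * τ :=
              mul_le_mul_of_nonneg_right h2 hτ.le
        _ = τ / 2 := by ring
      rw [PiLp.dist_eq_sum (by rw [hq]; exact hp0)]
      rw [hq]
      have hsum : ∑ i, dist (x i) ((α i + (round ((x i - α i) / τ) : ℤ) * τ)) ^ p
          ≤ (n : ℝ) * (τ / 2) ^ p := by
        calc ∑ i, dist (x i) ((α i + (round ((x i - α i) / τ) : ℤ) * τ)) ^ p
            ≤ ∑ _i : Fin n, (τ / 2) ^ p := by
              apply Finset.sum_le_sum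
              intro i _
              exact Real.rpow_le_rpow dist_nonneg (hcoord i) (le_of_lt hp0)
        _ = (n : ℝ) * (τ / 2) ^ p := by
              rw [Finset.sum_const, Finset.card_univ, Fintype.card_fin, nsmul_eq_mul]
      have hfinal : ((n : ℝ) * (τ / 2) ^ p) ^ (1 / p) = δ / 2 := by
        have h1 : (τ / 2 : ℝ) ^ p = τ ^ p / 2 ^ p :=
          Real.div_rpow hτ.le (by norm_num) p
        have h2 : ((2 : ℝ) ^ p) ^ (1 / p) = 2 := by
          rw [← Real.rpow_mul (by norm_num : (0:ℝ) ≤ 2),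
            mul_one_div_cancel (ne_of_gt hp0), Real.rpow_one]
        rw [h1, hδdef]
        rw [show (n : ℝ) * (τ ^ p / 2 ^ p) = ((n : ℝ) * τ ^ p) / 2 ^ p by ring]
        rw [Real.div_rpow (by positivity) (by positivity) (1 / p), h2]
      calc (∑ i, dist (x i) ((α i + (round ((x i - α i) / τ) : ℤ) * τ)) ^ p) ^ (1 / p)
          ≤ ((n : ℝ) * (τ / 2) ^ p) ^ (1 / p) := by
            apply Real.rpow_le_rpow _ hsum (by positivity)
            apply Finset.sum_nonneg
            intro i _
            exact Real.rpow_nonneg dist_nonneg p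
      _ = δ / 2 := hfinal
  -- classification transfer
  have htrans : ∀ x x' : PiLp (ENNReal.ofReal p) (fun _ : Fin n => ℝ),
      0 < margin f c x → IsGridPoint τ α x' → dist x x' ≤ δ / 2 →
      0 < margin f c x' := by
    intro x x' hx hgp hdist
    obtain ⟨c', htop, hmar⟩ := hgrid x' hgp
    have hM := hMpos c'
    have hg' : Mconst K c' * δ / 2 ≤ margin f c' x' := by
      have := (le_div_iff₀ hM).mp hmar
      linarith [this]
    have hkey : ∀ c'', f c'' x ≤ f c' x := by
      intro c''
      by_cases h : c'' = c'
      · simp [h]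
      · have hmem : c'' ∈ Finset.univ.erase c' :=
          Finset.mem_erase.2 ⟨h, Finset.mem_univ _⟩
        have h1 : margin f c' x' ≤ f c' x' - f c'' x' := by
          unfold margin; exact Finset.inf'_le (fun a => f c' x' - f a x') hmem
        have h2 : K c' + K c'' ≤ Mconst K c' := by
          unfold Mconst; exact Finset.le_sup' (fun a => K c' + K a) hmem
        have h3 := abs_le.1 (hf c' x x')
        have h4 := abs_le.1 (hf c'' x x')
        have h5 : (K c' + K c'') * dist x x' ≤ Mconst K c' * (δ / 2) :=
          mul_le_mul h2 hdist dist_nonneg hM.le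
        have h6 : K c' * dist x x' + K c'' * dist x x' ≤ Mconst K c' * δ / 2 := by
          linarith [h5]
        linarith [h3.1, h3.2, h4.1, h4.2, h1, hg', h6]
    have hcc : c' = c := by
      by_contra h
      have hmem : c' ∈ Finset.univ.erase c :=
        Finset.mem_erase.2 ⟨h, Finset.mem_univ _⟩
      have h1 : margin f c x ≤ f c x - f c' x := by
        unfold margin; exact Finset.inf'_le (fun a => f c x - f a x) hmem
      have h2 := hkey c
      linarith
    rw [← hcc]
    calc (0 : ℝ) < Mconst K c' * δ / 2 := by positivity
    _ ≤ margin f c' x' := hg'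
  -- sets
  obtain ⟨x₀, hx₀⟩ := hadv
  have hAne : ((fun x => ‖x - α‖) ''
      {x | (‖x - α‖ ≤ d ∧ 0 < margin f c x) ∧ ∀ i ∉ S, x i = α i}).Nonempty :=
    ⟨‖x₀ - α‖, x₀, hx₀, rfl⟩
  obtain ⟨y₀, hy₀g, hy₀S, hy₀d⟩ := hround x₀ hx₀.2
  have hy₀m : 0 < margin f c y₀ := htrans x₀ y₀ hx₀.1.2 hy₀g hy₀d
  have hGne : ((fun y => ‖y - α‖) ''
      {y | IsGridPoint τ α y ∧ 0 < margin f c y ∧ ∀ i ∉ S, y i = α i}).Nonempty :=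
    ⟨‖y₀ - α‖, y₀, ⟨hy₀g, hy₀m, hy₀S⟩, rfl⟩
  have hAbdd : BddBelow ((fun x => ‖x - α‖) ''
      {x | (‖x - α‖ ≤ d ∧ 0 < margin f c x) ∧ ∀ i ∉ S, x i = α i}) := by
    refine ⟨0, ?_⟩
    rintro b ⟨x, _, rfl⟩
    exact norm_nonneg _
  have hGbdd : BddBelow ((fun y => ‖y - α‖) ''
      {y | IsGridPoint τ α y ∧ 0 < margin f c y ∧ ∀ i ∉ S, y i = α i}) := by
    refine ⟨0, ?_⟩
    rintro b ⟨y, _, rfl⟩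
    exact norm_nonneg _
  constructor
  · apply le_csInf hAne
    rintro b ⟨x, ⟨⟨hxd, hxm⟩, hxS⟩, rfl⟩
    obtain ⟨x', hg, hS', hdist⟩ := hround x hxS
    have hm' : 0 < margin f c x' := htrans x x' hxm hg hdist
    have hle : sInf ((fun y => ‖y - α‖) ''
        {y | IsGridPoint τ α y ∧ 0 < margin f c y ∧ ∀ i ∉ S, y i = α i}) ≤ ‖x' - α‖ :=
      csInf_le hGbdd ⟨x', ⟨hg, hm', hS'⟩, rfl⟩
    have htri : ‖x' - α‖ ≤ ‖x' - x‖ + ‖x - α‖ := by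
      have := norm_add_le (x' - x) (x - α)
      rwa [sub_add_sub_cancel] at this
    have hnx : ‖x' - x‖ ≤ δ / 2 := by
      rw [← dist_eq_norm, dist_comm]
      exact hdist
    linarith
  · apply le_csInf hGne
    rintro b ⟨y, ⟨hyg, hym, hyS⟩, rfl⟩
    by_cases hyd : ‖y - α‖ ≤ d
    · exact csInf_le hAbdd ⟨y, ⟨⟨hyd, hym⟩, hyS⟩, rfl⟩
    · have h1 : sInf ((fun x => ‖x - α‖) ''
          {x | (‖x - α‖ ≤ d ∧ 0 < margin f c x) ∧ ∀ i ∉ S, x i = α i}) ≤ ‖x₀ - α‖ :=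
        csInf_le hAbdd ⟨x₀, hx₀, rfl⟩
      linarith [hx₀.1.1]
end
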